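/- Let (Ω, F, P) be a probability space and for each n = 1,...,N let A^(n) : Ω → ℝ^{I_n × R} be a random matrix with rows a^(n)_{i_n} : Ω → ℝ^R, where the collection of all row vectors is mutually independent and every entry is square-integrable. Define deterministic matrices B^(n) ∈ ℝ^{I_n × R²} whose i_n-th row is vec(E[a^(n)_{i_n} a^(n)T_{i_n}]). Then E[‖[[A^(1),...,A^(N)]]‖_F²] = 1_{∏_n I_n}^T (⊙_n B^(n)) 1_{R²}, where 1_L denotes the all-ones vector of length L. -/

import Mathlib

open scoped BigOperators Matrix
open Finset Matrix MeasureTheory ProbabilityTheory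

/-- Khatri-Rao product (in reverse order): row indexed by a multi-index. -/
def khatriRao {ι : Type*} [Fintype ι] {I : ι → ℕ} {κ : Type*}
    (A : (n : ι) → Matrix (Fin (I n)) κ ℝ) :
    Matrix ((n : ι) → Fin (I n)) κ ℝ :=
  fun i k => ∏ n, A n (i n) k

/-- Outer product of `N` vectors, as a tensor indexed by multi-indices. -/
def outerProd {ι : Type*} [Fintype ι] {I : ι → ℕ}
    (u : (n : ι) → Fin (I n) → ℝ) : ((n : ι) → Fin (I n)) → ℝ :=
  fun i => ∏ n, u n (i n)

/-- Kruskal operator: the tensor `[[A⁽¹⁾, …, A⁽ᴺ⁾]] = ∑ᵣ a⁽¹⁾₊ᵣ ∘ ⋯ ∘ a⁽ᴺ⁾₊ᵣ`. -/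
def kruskal {ι : Type*} [Fintype ι] {I : ι → ℕ} {R : ℕ}
    (A : (n : ι) → Matrix (Fin (I n)) (Fin R) ℝ) : ((n : ι) → Fin (I n)) → ℝ :=
  ∑ r : Fin R, outerProd (fun n iₙ => A n iₙ r)

/-- Integral of a finite product of independent integrable random variables. -/
lemma integrable_and_integral_prod {ι Ω : Type*} [MeasurableSpace Ω] {μ : Measure Ω}
    [IsProbabilityMeasure μ] {Y : ι → Ω → ℝ}
    (hmeas : ∀ i, Measurable (Y i))
    (hindep : iIndepFun Y μ)
    (hint : ∀ i, Integrable (Y i) μ) (s : Finset ι) :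
    Integrable (fun ω => ∏ i ∈ s, Y i ω) μ ∧
      ∫ ω, ∏ i ∈ s, Y i ω ∂μ = ∏ i ∈ s, ∫ ω, Y i ω ∂μ := by
  classical
  induction s using Finset.induction_on with
  | empty => simp
  | @insert a s ha ih =>
    have hIF : IndepFun (∏ j ∈ s, Y j) (Y a) μ :=
      hindep.indepFun_finset_prod_of_notMem hmeas ha
    have hpe : (∏ j ∈ s, Y j) = fun ω => ∏ i ∈ s, Y i ω :=
      funext fun ω => Finset.prod_apply ω s Y
    have hprodint : Integrable (∏ j ∈ s, Y j) μ := by rw [hpe]; exact ih.1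
    have h1 : (fun ω => ∏ i ∈ insert a s, Y i ω) = (∏ j ∈ s, Y j) * Y a := by
      funext ω
      simp [Finset.prod_insert ha, Finset.prod_apply, mul_comm]
    constructor
    · rw [h1]
      exact hIF.integrable_mul hprodint (hint a)
    · have h2 := hIF.integral_mul_eq_mul_integral hprodint.aestronglyMeasurable (hint a).aestronglyMeasurable
      rw [h1, h2, Finset.prod_insert ha]
      have : ∫ ω, (∏ j ∈ s, Y j) ω ∂μ = ∏ i ∈ s, ∫ ω, Y i ω ∂μ := by
        simp_rw [Finset.prod_apply]
        exact ih.2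
      rw [this]
      ring

theorem stmt11 {N R : ℕ} {I : Fin N → ℕ}
    {Ω : Type*} [MeasurableSpace Ω] (P : Measure Ω) [IsProbabilityMeasure P]
    (A : (n : Fin N) → Ω → Matrix (Fin (I n)) (Fin R) ℝ)
    (hmeas : ∀ n (i : Fin (I n)), Measurable (fun ω => A n ω i))
    (hindep : iIndepFun
      (fun p : Σ n : Fin N, Fin (I n) => fun ω => A p.1 ω p.2) P)
    (hL2 : ∀ n (i : Fin (I n)) (r : Fin R), MemLp (fun ω => A n ω i r) 2 P)
    (B : (n : Fin N) → Matrix (Fin (I n)) (Fin R × Fin R) ℝ)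
    (hB : ∀ n (i : Fin (I n)) (p : Fin R × Fin R),
      B n i p = ∫ ω, A n ω i p.1 * A n ω i p.2 ∂P) :
    (∫ ω, ∑ i : (n : Fin N) → Fin (I n), kruskal (fun n => A n ω) i ^ 2 ∂P)
      = dotProduct (fun _ => (1 : ℝ))
          ((khatriRao B).mulVec (fun _ => (1 : ℝ))) := by
  classical
  -- key computation for each multi-index `i` and pair `p`
  have main : ∀ (i : (n : Fin N) → Fin (I n)) (p : Fin R × Fin R),
      Integrable (fun ω => ∏ n, (A n ω (i n) p.1 * A n ω (i n) p.2)) P ∧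
        ∫ ω, ∏ n, (A n ω (i n) p.1 * A n ω (i n) p.2) ∂P = ∏ n, B n (i n) p := by
    intro i p
    set W : (Σ n : Fin N, Fin (I n)) → Ω → ℝ :=
      fun q ω => A q.1 ω q.2 p.1 * A q.1 ω q.2 p.2 with hW
    have hWmeas : ∀ q, Measurable (W q) := fun q =>
      ((measurable_pi_apply p.1).comp (hmeas q.1 q.2)).mul
        ((measurable_pi_apply p.2).comp (hmeas q.1 q.2))
    have hWindep : iIndepFun W P := by
      have := hindep.comp (fun _ => fun v : Fin R → ℝ => v p.1 * v p.2)
        (fun _ => (measurable_pi_apply p.1).mul (measurable_pi_apply p.2))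
      exact this
    have hWint : ∀ q, Integrable (W q) P := by
      intro q
      have hsm := (hL2 q.1 q.2 p.2).smul (q := 2) (r := 1) (hL2 q.1 q.2 p.1)
      rw [memLp_one_iff_integrable] at hsm
      have : ((fun ω => A q.1 ω q.2 p.1) • fun ω => A q.1 ω q.2 p.2)
          = W q := by
        funext ω
        simp [hW]
      rwa [this] at hsm
    have inj : Function.Injective (fun n : Fin N => (⟨n, i n⟩ : Σ n : Fin N, Fin (I n))) := by
      intro a b h
      exact congrArg Sigma.fst h
    have himg : ∀ ω, ∏ q ∈ Finset.image (fun n => (⟨n, i n⟩ : Σ n : Fin N, Fin (I n)))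
        Finset.univ, W q ω = ∏ n, (A n ω (i n) p.1 * A n ω (i n) p.2) := by
      intro ω
      rw [Finset.prod_image (fun a _ b _ h => inj h)]
    obtain ⟨hint1, heq1⟩ := integrable_and_integral_prod hWmeas hWindep hWint
      (Finset.image (fun n => (⟨n, i n⟩ : Σ n : Fin N, Fin (I n))) Finset.univ)
    constructor
    · have : (fun ω => ∏ q ∈ Finset.image (fun n => (⟨n, i n⟩ : Σ n : Fin N, Fin (I n)))
          Finset.univ, W q ω) = fun ω => ∏ n, (A n ω (i n) p.1 * A n ω (i n) p.2) := by
        funext ω; exact himg ω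
      rwa [this] at hint1
    · calc ∫ ω, ∏ n, (A n ω (i n) p.1 * A n ω (i n) p.2) ∂P
          = ∫ ω, ∏ q ∈ Finset.image (fun n => (⟨n, i n⟩ : Σ n : Fin N, Fin (I n)))
              Finset.univ, W q ω ∂P := by
            apply integral_congr_ae
            filter_upwards with ω
            exact (himg ω).symm
        _ = ∏ q ∈ Finset.image (fun n => (⟨n, i n⟩ : Σ n : Fin N, Fin (I n)))
              Finset.univ, ∫ ω, W q ω ∂P := heq1
        _ = ∏ n, ∫ ω, A n ω (i n) p.1 * A n ω (i n) p.2 ∂P :=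
            Finset.prod_image (fun a _ b _ h => inj h)
        _ = ∏ n, B n (i n) p := by
            refine Finset.prod_congr rfl fun n _ => ?_
            rw [hB]
  -- pointwise expansion of the square of the Kruskal tensor
  have expand : ∀ ω (i : (n : Fin N) → Fin (I n)),
      kruskal (fun n => A n ω) i ^ 2
        = ∑ p : Fin R × Fin R, ∏ n, (A n ω (i n) p.1 * A n ω (i n) p.2) := by
    intro ω i
    have : kruskal (fun n => A n ω) i = ∑ r : Fin R, ∏ n, A n ω (i n) r := by
      simp [kruskal, outerProd]
    rw [this, sq, Finset.sum_mul_sum, Fintype.sum_prod_type]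
    refine Finset.sum_congr rfl fun r _ => Finset.sum_congr rfl fun s _ => ?_
    rw [← Finset.prod_mul_distrib]
  calc (∫ ω, ∑ i : (n : Fin N) → Fin (I n), kruskal (fun n => A n ω) i ^ 2 ∂P)
      = ∫ ω, ∑ i : (n : Fin N) → Fin (I n),
          ∑ p : Fin R × Fin R, ∏ n, (A n ω (i n) p.1 * A n ω (i n) p.2) ∂P := by
        apply integral_congr_ae
        filter_upwards with ω
        exact Finset.sum_congr rfl fun i _ => expand ω i
    _ = ∑ i : (n : Fin N) → Fin (I n),
          ∑ p : Fin R × Fin R, ∫ ω, ∏ n, (A n ω (i n) p.1 * A n ω (i n) p.2) ∂P := by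
        rw [integral_finset_sum _ (fun i _ =>
          integrable_finset_sum _ (fun p _ => (main i p).1))]
        exact Finset.sum_congr rfl fun i _ =>
          integral_finset_sum _ (fun p _ => (main i p).1)
    _ = ∑ i : (n : Fin N) → Fin (I n), ∑ p : Fin R × Fin R, ∏ n, B n (i n) p :=
        Finset.sum_congr rfl fun i _ => Finset.sum_congr rfl fun p _ => (main i p).2
    _ = dotProduct (fun _ => (1 : ℝ))
          ((khatriRao B).mulVec (fun _ => (1 : ℝ))) := by
        simp [dotProduct, Matrix.mulVec, khatriRao]
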